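/- arXiv:1312.2245 — 5 statements merged into one kernel-verified Lean document; each statement's English description precedes it below -/
import Mathlib

section
/- For every integer d ≥ 4, the polynomial P₃(x) = x³ + (2−d)x² + (1−2d)x + (2d−3) satisfies P₃(d − 3/(d+2)) < 0. -/
theorem stmt_0 (d : ℤ) (hd : 4 ≤ d) :
    (let D : ℝ := (d : ℝ); let x : ℝ := D - 3 / (D + 2);
      x ^ 3 + (2 - D) * x ^ 2 + (1 - 2 * D) * x + (2 * D - 3)) < 0 := by
  simp only []
  have hD : (4:ℝ) ≤ (d:ℝ) := by exact_mod_cast hd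
  set D : ℝ := (d:ℝ)
  have h2 : D + 2 > 0 := by linarith
  have hx : D - 3 / (D + 2) = (D * (D + 2) - 3) / (D + 2) := by
    field_simp
  rw [hx]
  rw [div_pow, div_pow]
  have key : ((D * (D + 2) - 3)^3 + (2 - D) * (D * (D + 2) - 3)^2 * (D + 2) + (1 - 2 * D) * (D * (D + 2) - 3) * (D + 2)^2 + (2 * D - 3) * (D + 2)^3) / (D + 2)^3 < 0 := by
    apply div_neg_of_neg_of_pos
    · nlinarith [sq_nonneg D, sq_nonneg (D-4), pow_pos h2 3]
    · positivity
  have expand : (D * (D + 2) - 3)^3 / (D + 2)^3 + (2 - D) * ((D * (D + 2) - 3)^2 / (D + 2)^2) + (1 - 2 * D) * ((D * (D + 2) - 3) / (D + 2)) + (2 * D - 3) = ((D * (D + 2) - 3)^3 + (2 - D) * (D * (D + 2) - 3)^2 * (D + 2) + (1 - 2 * D) * (D * (D + 2) - 3) * (D + 2)^2 + (2 * D - 3) * (D + 2)^3) / (D + 2)^3 := by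
    field_simp
  rw [expand]
  exact key
end

section
/- For every integer d ≥ 4, the largest real root θ_d of x³ + (2−d)x² + (1−2d)x + (2d−3) satisfies d − 3/(d+2) < θ_d < d − 3/(d+3). -/
theorem stmt_3 (d : ℤ) (hd : 4 ≤ d) (θ : ℝ)
    (hroot : θ ^ 3 + (2 - (d : ℝ)) * θ ^ 2 + (1 - 2 * (d : ℝ)) * θ + (2 * (d : ℝ) - 3) = 0)
    (hmax : ∀ y : ℝ,
      y ^ 3 + (2 - (d : ℝ)) * y ^ 2 + (1 - 2 * (d : ℝ)) * y + (2 * (d : ℝ) - 3) = 0 → y ≤ θ) :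
    (d : ℝ) - 3 / ((d : ℝ) + 2) < θ ∧ θ < (d : ℝ) - 3 / ((d : ℝ) + 3) := by
  set e := (d : ℝ) with he'
  have he : (4:ℝ) ≤ e := by rw [he']; exact_mod_cast hd
  have h2 : (0:ℝ) < e + 2 := by linarith
  have h3 : (0:ℝ) < e + 3 := by linarith
  set f : ℝ → ℝ := fun x => x ^ 3 + (2 - e) * x ^ 2 + (1 - 2 * e) * x + (2 * e - 3) with hf
  set l := e - 3 / (e + 2) with hl
  set u := e - 3 / (e + 3) with hu
  have hlu : l < u := by
    have : 3 / (e + 3) < 3 / (e + 2) := by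
      apply div_lt_div_of_pos_left <;> linarith
    simp only [hl, hu]; linarith
  have keyl : f l * (e + 2) ^ 3 = -3 * e ^ 3 - 3 * e ^ 2 + 6 * e - 27 := by
    simp only [hf, hl]; field_simp; ring
  have hfl : f l < 0 := by
    nlinarith [pow_pos h2 3, keyl, he]
  have keyu : f u * (e + 3) ^ 3 = 6 * e ^ 2 - 81 := by
    simp only [hf, hu]; field_simp; ring
  have hfu : 0 < f u := by
    nlinarith [pow_pos h3 3, keyu, he]
  have hcont : ContinuousOn f (Set.Icc l u) := by
    apply Continuous.continuousOn; fun_prop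
  obtain ⟨c, hc, hfc⟩ := intermediate_value_Ioo hlu.le hcont ⟨hfl, hfu⟩
  have hcθ : c ≤ θ := hmax c hfc
  constructor
  · linarith [hc.1]
  · by_contra h
    push_neg at h
    have huθ : u ≤ θ := h
    have hue : e - 1 ≤ u := by
      have h1 : 3 / (e + 3) ≤ 1 := by
        rw [div_le_one h3]; linarith
      simp only [hu]; linarith
    have ha : (0:ℝ) ≤ θ - (e - 1) := by linarith
    have hb : (0:ℝ) ≤ u - (e - 1) := by linarith
    have hq : 0 ≤ θ ^ 2 + θ * u + u ^ 2 + (2 - e) * (θ + u) + (1 - 2 * e) := by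
      nlinarith [mul_nonneg ha hb, mul_nonneg ha ha, mul_nonneg hb hb, he]
    have hfθ : f θ = 0 := hroot
    have hdiff : f θ - f u = (θ - u) * (θ ^ 2 + θ * u + u ^ 2 + (2 - e) * (θ + u) + (1 - 2 * e)) := by
      simp only [hf]; ring
    nlinarith [mul_nonneg (sub_nonneg.2 huθ) hq]
end

section
/- For positive reals n₁, n₂, n₃, the 3×3 matrix A₃ with rows (d − 2/n₁, 1/n₁, 1/n₁), (1/n₂, d − 2/n₂, 1/n₂), (1/n₃, 1/n₃, d − 2/n₃) has largest eigenvalue d, and its second largest eigenvalue equals d − 1/n₁ − 1/n₂ − 1/n₃ + sqrt(1/n₁² + 1/n₂² + 1/n₃² − 1/(n₁n₂) − 1/(n₂n₃) − 1/(n₃n₁)). -/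
open Polynomial

theorem stmt_10 (d n₁ n₂ n₃ : ℝ) (h₁ : 0 < n₁) (h₂ : 0 < n₂) (h₃ : 0 < n₃) :
    let A : Matrix (Fin 3) (Fin 3) ℝ :=
      !![d - 2/n₁, 1/n₁, 1/n₁;
         1/n₂, d - 2/n₂, 1/n₂;
         1/n₃, 1/n₃, d - 2/n₃]
    let μ : ℝ := d - 1/n₁ - 1/n₂ - 1/n₃ +
      Real.sqrt (1/n₁^2 + 1/n₂^2 + 1/n₃^2 - 1/(n₁*n₂) - 1/(n₂*n₃) - 1/(n₃*n₁))
    ∃ ν : ℝ, A.charpoly.roots = {d, μ, ν} ∧ ν ≤ μ ∧ μ ≤ d := by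
  intro A μ
  set a : ℝ := 1/n₁ with ha
  set b : ℝ := 1/n₂ with hb
  set c : ℝ := 1/n₃ with hc
  have ha0 : 0 < a := by positivity
  have hb0 : 0 < b := by positivity
  have hc0 : 0 < c := by positivity
  set Q : ℝ := 1/n₁^2 + 1/n₂^2 + 1/n₃^2 - 1/(n₁*n₂) - 1/(n₂*n₃) - 1/(n₃*n₁) with hQdef
  have hQeq : Q = a^2 + b^2 + c^2 - a*b - b*c - c*a := by
    rw [hQdef, ha, hb, hc]; field_simp
  have hQ0 : 0 ≤ Q := by nlinarith [sq_nonneg (a-b), sq_nonneg (b-c), sq_nonneg (c-a)]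
  refine ⟨d - a - b - c - Real.sqrt Q, ?_, ?_, ?_⟩
  · have hsq : Real.sqrt Q ^ 2 = Q := Real.sq_sqrt hQ0
    have hA : A = !![d - 2*a, a, a; b, d - 2*b, b; c, c, d - 2*c] := by
      ext i j
      fin_cases i <;> fin_cases j <;> simp [A, ha, hb, hc] <;> ring
    have hfac : A.charpoly =
        (X - C d) * (X - C μ) * (X - C (d - a - b - c - Real.sqrt Q)) := by
      rw [hA, Matrix.charpoly, Matrix.det_fin_three]
      simp only [A, Matrix.charmatrix_apply_eq, Matrix.charmatrix_apply_ne, Fin.isValue,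
        Matrix.cons_val', Matrix.cons_val_zero, Matrix.cons_val_one, Matrix.head_cons,
        Matrix.empty_val', Matrix.cons_val_fin_one, Matrix.head_fin_const,
        Matrix.cons_val_two, Matrix.tail_cons, ne_eq, Fin.reduceEq, not_false_eq_true,
        Matrix.of_apply]
      have hμ : μ = d - a - b - c + Real.sqrt Q := rfl
      rw [hμ]
      have hC : (C (Real.sqrt Q))^2
          = C a^2 + C b^2 + C c^2 - C a * C b - C b * C c - C c * C a := by
        rw [← map_pow, hsq, hQeq]
        simp only [map_sub, map_add, map_mul, map_pow]
      simp only [map_add, map_sub, map_mul, map_pow, map_ofNat]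
      linear_combination (X - C d) * hC
    rw [hfac]
    have h2 : (X - C μ) * (X - C (d - a - b - c - Real.sqrt Q)) ≠ 0 := by
      apply mul_ne_zero <;> exact X_sub_C_ne_zero _
    rw [mul_assoc, roots_mul (mul_ne_zero (X_sub_C_ne_zero _) h2), roots_mul h2,
      roots_X_sub_C, roots_X_sub_C, roots_X_sub_C]
    rfl
  · have : 0 ≤ Real.sqrt Q := Real.sqrt_nonneg _
    show d - a - b - c - Real.sqrt Q ≤ d - a - b - c + Real.sqrt Q
    linarith
  · show d - a - b - c + Real.sqrt Q ≤ d
    have h : Real.sqrt Q ≤ a + b + c := by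
      rw [show a + b + c = Real.sqrt ((a+b+c)^2) from (Real.sqrt_sq (by positivity)).symm]
      apply Real.sqrt_le_sqrt
      nlinarith
    linarith
end

section
/- Let d ≥ 4 and let G be a d-regular simple graph with κ'(G) = 2 (edge-connectivity 2) that does not contain 2 edge-disjoint spanning trees. Then G has at least 3(d+1) vertices. -/
open SimpleGraph

attribute [local instance] Classical.propDecidable
set_option linter.unusedSectionVars false
set_option maxHeartbeats 1000000

namespace NWPack

variable {V : Type*} [Fintype V]

/-- Number of connected components. -/
noncomputable def cc (X : SimpleGraph V) : ℕ := Nat.card X.ConnectedComponent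

/-- Graph from a finite edge set. -/
def gg (F : Finset (Sym2 V)) : SimpleGraph V := SimpleGraph.fromEdgeSet (↑F)

lemma reach_repl {X Y : SimpleGraph V} (h : ∀ u v, X.Adj u v → Y.Reachable u v) {u v : V}
    (huv : X.Reachable u v) : Y.Reachable u v := by
  obtain ⟨p⟩ := huv
  induction p with
  | nil => exact Reachable.refl _
  | cons ha _ ih => exact (h _ _ ha).trans ih

lemma reach_closed {X : SimpleGraph V} {U : Set V} (hU : ∀ u v, X.Adj u v → u ∈ U → v ∈ U)
    {x y : V} (h : X.Reachable x y) (hx : x ∈ U) : y ∈ U := by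
  obtain ⟨p⟩ := h
  induction p with
  | nil => exact hx
  | cons ha _ ih => exact ih (hU _ _ ha hx)

lemma reach_sup_edge {X : SimpleGraph V} {x y : V} {u v : V}
    (h : (X ⊔ fromEdgeSet {s(x, y)}).Reachable u v) :
    X.Reachable u v ∨ (X.Reachable u x ∧ X.Reachable y v) ∨
      (X.Reachable u y ∧ X.Reachable x v) := by
  obtain ⟨p⟩ := h
  induction p with
  | nil => exact Or.inl (Reachable.refl _)
  | @cons a c v ha p ih =>
    rw [sup_adj, fromEdgeSet_adj, Set.mem_singleton_iff, Sym2.eq_iff] at ha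
    rcases ha with ha | ⟨hac, -⟩
    · rcases ih with h1 | ⟨h1, h2⟩ | ⟨h1, h2⟩
      · exact Or.inl (ha.reachable.trans h1)
      · exact Or.inr (Or.inl ⟨ha.reachable.trans h1, h2⟩)
      · exact Or.inr (Or.inr ⟨ha.reachable.trans h1, h2⟩)
    · rcases hac with ⟨rfl, rfl⟩ | ⟨rfl, rfl⟩
      · rcases ih with h1 | ⟨h1, h2⟩ | ⟨h1, h2⟩
        · exact Or.inr (Or.inl ⟨Reachable.refl _, h1⟩)
        · exact Or.inr (Or.inl ⟨Reachable.refl _, h2⟩)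
        · exact Or.inl h2
      · rcases ih with h1 | ⟨h1, h2⟩ | ⟨h1, h2⟩
        · exact Or.inr (Or.inr ⟨Reachable.refl _, h1⟩)
        · exact Or.inl h2
        · exact Or.inr (Or.inr ⟨Reachable.refl _, h2⟩)

lemma reach_sup_edge_of_reach {X : SimpleGraph V} {x y : V} (h : X.Reachable x y) (u v : V) :
    (X ⊔ fromEdgeSet {s(x, y)}).Reachable u v ↔ X.Reachable u v := by
  constructor
  · intro hr
    rcases reach_sup_edge hr with h1 | ⟨h1, h2⟩ | ⟨h1, h2⟩
    · exact h1
    · exact h1.trans (h.trans h2)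
    · exact h1.trans (h.symm.trans h2)
  · exact fun hr => hr.mono le_sup_left

lemma cc_eq_of_reach_iff {X Y : SimpleGraph V}
    (h : ∀ u v, X.Reachable u v ↔ Y.Reachable u v) : cc X = cc Y :=
  Nat.card_congr (Quot.congrRight h)

lemma cc_le_of_le {X Y : SimpleGraph V} (h : X ≤ Y) : cc Y ≤ cc X := by
  have hs : Function.Surjective (ConnectedComponent.map (Hom.ofLE h)) := by
    intro c
    obtain ⟨v, hv⟩ := c.exists_rep
    exact ⟨X.connectedComponentMk v, by rw [← hv]; rfl⟩
  exact Nat.card_le_card_of_surjective _ hs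

lemma cc_lt_of_reach {X Y : SimpleGraph V} (h : X ≤ Y) {x y : V}
    (hxy : ¬X.Reachable x y) (hxy' : Y.Reachable x y) : cc Y < cc X := by
  set f := ConnectedComponent.map (Hom.ofLE h) with hf
  have hs : Function.Surjective f := by
    intro c
    obtain ⟨v, hv⟩ := c.exists_rep
    exact ⟨X.connectedComponentMk v, by rw [← hv]; rfl⟩
  refine lt_of_le_of_ne (Nat.card_le_card_of_surjective _ hs) fun hcard => ?_
  letI : Fintype X.ConnectedComponent := Fintype.ofFinite _
  letI : Fintype Y.ConnectedComponent := Fintype.ofFinite _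
  have hcard' : Fintype.card X.ConnectedComponent = Fintype.card Y.ConnectedComponent := by
    rw [← Nat.card_eq_fintype_card, ← Nat.card_eq_fintype_card]
    exact (hcard.symm : _)
  have hbij : Function.Bijective f :=
    (Fintype.bijective_iff_surjective_and_card f).2 ⟨hs, hcard'⟩
  have : X.connectedComponentMk x = X.connectedComponentMk y := by
    apply hbij.injective
    show Y.connectedComponentMk x = Y.connectedComponentMk y
    exact ConnectedComponent.eq.2 hxy'
  exact hxy (ConnectedComponent.eq.1 this)

lemma cc_sup_edge {X : SimpleGraph V} {x y : V} (hne : x ≠ y) (h : ¬X.Reachable x y) :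
    cc (X ⊔ fromEdgeSet {s(x, y)}) + 1 = cc X := by
  set Y := X ⊔ fromEdgeSet {s(x, y)} with hYdef
  have hle : X ≤ Y := le_sup_left
  have hadj : Y.Adj x y := by
    rw [hYdef, sup_adj, fromEdgeSet_adj]
    exact Or.inr ⟨rfl, hne⟩
  set f : X.ConnectedComponent → Y.ConnectedComponent :=
    ConnectedComponent.map (Hom.ofLE hle) with hf
  have hfmk : ∀ v : V, f (X.connectedComponentMk v) = Y.connectedComponentMk v := fun _ => rfl
  letI : Fintype X.ConnectedComponent := Fintype.ofFinite _
  letI : Fintype Y.ConnectedComponent := Fintype.ofFinite _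
  have key : Function.Bijective
      (fun c : {c : X.ConnectedComponent // ¬c = X.connectedComponentMk y} => f c.1) := by
    constructor
    · rintro ⟨c1, h1⟩ ⟨c2, h2⟩ hc
      obtain ⟨u, hu⟩ := c1.exists_rep
      obtain ⟨v, hv⟩ := c2.exists_rep
      subst hu; subst hv
      have h1' : ¬X.Reachable u y := fun hr => h1 (ConnectedComponent.eq.2 hr)
      have h2' : ¬X.Reachable v y := fun hr => h2 (ConnectedComponent.eq.2 hr)
      have hc' : Y.connectedComponentMk u = Y.connectedComponentMk v := hc
      have := ConnectedComponent.eq.1 hc'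
      rcases reach_sup_edge this with h3 | ⟨h3, h4⟩ | ⟨h3, h4⟩
      · exact Subtype.ext (ConnectedComponent.eq.2 h3)
      · exact absurd h4.symm h2'
      · exact absurd h3 h1'
    · intro c
      obtain ⟨z, hz⟩ := c.exists_rep
      by_cases hzy : X.Reachable z y
      · have hxz : ¬X.Reachable x y := h
        refine ⟨⟨X.connectedComponentMk x, fun hc => hxz (ConnectedComponent.eq.1 hc)⟩, ?_⟩
        show Y.connectedComponentMk x = c
        rw [← hz]
        exact ConnectedComponent.eq.2 (hadj.reachable.trans (hzy.mono hle).symm)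
      · refine ⟨⟨X.connectedComponentMk z, fun hc => hzy (ConnectedComponent.eq.1 hc)⟩, ?_⟩
        show Y.connectedComponentMk z = c
        rw [← hz]
        rfl
  have hcards : Fintype.card {c : X.ConnectedComponent // ¬c = X.connectedComponentMk y}
      = Fintype.card Y.ConnectedComponent := Fintype.card_of_bijective key
  have hsub : Fintype.card {c : X.ConnectedComponent // ¬c = X.connectedComponentMk y}
      = Fintype.card X.ConnectedComponent
        - Fintype.card {c : X.ConnectedComponent // c = X.connectedComponentMk y} :=
    Fintype.card_subtype_compl _
  have hone : Fintype.card {c : X.ConnectedComponent // c = X.connectedComponentMk y} = 1 :=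
    Fintype.card_subtype_eq _
  haveI : Nonempty X.ConnectedComponent := ⟨X.connectedComponentMk y⟩
  have hpos : 0 < Fintype.card X.ConnectedComponent := Fintype.card_pos
  rw [cc, cc, Nat.card_eq_fintype_card, Nat.card_eq_fintype_card, ← hcards, hsub, hone]
  omega

lemma fromEdgeSet_loop (a : V) : fromEdgeSet {s(a, a)} = (⊥ : SimpleGraph V) := by
  ext u v
  simp only [fromEdgeSet_adj, Set.mem_singleton_iff, Sym2.eq_iff, bot_adj, iff_false]
  rintro ⟨⟨rfl, rfl⟩ | ⟨rfl, rfl⟩, hne⟩ <;> exact hne rfl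

lemma gg_insert (e : Sym2 V) (F : Finset (Sym2 V)) :
    gg (insert e F) = gg F ⊔ fromEdgeSet {e} := by
  rw [gg, gg, Finset.coe_insert, Set.insert_eq, fromEdgeSet_union, sup_comm]

lemma cc_le_cc_sup_add (X : SimpleGraph V) (F : Finset (Sym2 V)) :
    cc X ≤ cc (X ⊔ gg F) + F.card := by
  classical
  induction F using Finset.induction_on with
  | empty => simp [gg, fromEdgeSet_empty]
  | @insert e F he ih =>
    rw [gg_insert, ← sup_assoc, Finset.card_insert_of_notMem he]
    induction e using Sym2.ind with
    | _ a b =>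
      rcases eq_or_ne a b with rfl | hab
      · rw [fromEdgeSet_loop, sup_bot_eq]
        omega
      · by_cases hr : (X ⊔ gg F).Reachable a b
        · have := cc_eq_of_reach_iff (reach_sup_edge_of_reach hr)
          omega
        · have := cc_sup_edge hab hr
          omega

lemma cc_bot : cc (⊥ : SimpleGraph V) = Fintype.card V := by
  rw [cc, ← Nat.card_eq_fintype_card]
  apply Nat.card_congr
  refine (Equiv.ofBijective (fun v : V => (⊥ : SimpleGraph V).connectedComponentMk v)
    ⟨?_, ?_⟩).symm
  · intro u v huv
    exact reachable_bot.1 (ConnectedComponent.eq.1 huv)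
  · intro c
    obtain ⟨v, hv⟩ := c.exists_rep
    exact ⟨v, hv⟩

lemma cc_eq_one_iff {X : SimpleGraph V} : cc X = 1 ↔ X.Connected := by
  rw [cc, Nat.card_eq_one_iff_unique]
  constructor
  · rintro ⟨hsub, hne⟩
    obtain ⟨c⟩ := hne
    obtain ⟨v, -⟩ := c.exists_rep
    haveI : Nonempty V := ⟨v⟩
    refine ⟨fun u w => ?_⟩
    have : X.connectedComponentMk u = X.connectedComponentMk w := Subsingleton.elim _ _
    exact ConnectedComponent.eq.1 this
  · intro hX
    haveI := hX.nonempty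
    obtain ⟨v⟩ := hX.nonempty
    refine ⟨⟨fun c c' => ?_⟩, ⟨X.connectedComponentMk v⟩⟩
    obtain ⟨u, hu⟩ := c.exists_rep
    obtain ⟨w, hw⟩ := c'.exists_rep
    rw [← hu, ← hw]
    exact ConnectedComponent.eq.2 (hX.preconnected u w)

/-! ### Forests relative to a base graph -/

variable (G : SimpleGraph V)

/-- `F` is a spanning forest relative to the base graph `B`, inside `G`. -/
def Good (B : SimpleGraph V) (F : Finset (Sym2 V)) : Prop :=
  (↑F : Set (Sym2 V)) ⊆ G.edgeSet ∧ cc (B ⊔ gg F) + F.card = cc B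

variable {G}

lemma good_subset {B : SimpleGraph V} {F F' : Finset (Sym2 V)} (hF : Good G B F)
    (hsub : F' ⊆ F) : Good G B F' := by
  obtain ⟨hFG, hFc⟩ := hF
  refine ⟨Set.Subset.trans (Finset.coe_subset.2 hsub) hFG, ?_⟩
  have h1 : cc B ≤ cc (B ⊔ gg F') + F'.card := cc_le_cc_sup_add B F'
  have hsplit : B ⊔ gg F = (B ⊔ gg F') ⊔ gg (F \ F') := by
    rw [sup_assoc, gg, gg, gg, ← fromEdgeSet_union, ← Finset.coe_union,
      Finset.union_sdiff_of_subset hsub]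
  have h2 : cc (B ⊔ gg F') ≤ cc (B ⊔ gg F) + (F \ F').card := by
    rw [hsplit]; exact cc_le_cc_sup_add _ _
  have h3 : (F \ F').card + F'.card = F.card := Finset.card_sdiff_add_card_eq_card hsub
  omega

lemma good_erase_not_reach {B : SimpleGraph V} {F : Finset (Sym2 V)} (hF : Good G B F)
    {f : Sym2 V} (hf : f ∈ F) {a b : V} (hab : f = s(a, b)) :
    ¬(B ⊔ gg (F.erase f)).Reachable a b := by
  subst hab
  intro hr
  have hgood' := good_subset hF (Finset.erase_subset s(a, b) F)
  have hsplit : B ⊔ gg F = (B ⊔ gg (F.erase s(a, b))) ⊔ fromEdgeSet {s(a, b)} := by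
    conv_lhs => rw [← Finset.insert_erase hf]
    rw [gg_insert, sup_assoc]
  have hcc : cc (B ⊔ gg F) = cc (B ⊔ gg (F.erase s(a, b))) := by
    rw [hsplit]
    exact cc_eq_of_reach_iff (reach_sup_edge_of_reach hr)
  have h1 := hF.2
  have h2 := hgood'.2
  have hcards : (F.erase s(a, b)).card + 1 = F.card := Finset.card_erase_add_one hf
  omega

lemma good_not_reach_base {B : SimpleGraph V} {F : Finset (Sym2 V)} (hF : Good G B F)
    {f : Sym2 V} (hf : f ∈ F) {a b : V} (hab : f = s(a, b)) : ¬B.Reachable a b :=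
  fun hr => good_erase_not_reach hF hf hab (hr.mono le_sup_left)

lemma good_insert {B : SimpleGraph V} {F : Finset (Sym2 V)} (hF : Good G B F)
    {e : Sym2 V} (he : e ∈ G.edgeSet) (heF : e ∉ F) {a b : V} (hab : e = s(a, b))
    (hr : ¬(B ⊔ gg F).Reachable a b) : Good G B (insert e F) := by
  subst hab
  obtain ⟨hFG, hFc⟩ := hF
  have hne : a ≠ b := by
    intro hEq
    exact G.not_isDiag_of_mem_edgeSet he (by rw [hEq]; exact Sym2.mk_isDiag_iff.2 rfl)
  constructor
  · rw [Finset.coe_insert]; exact Set.insert_subset he hFG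
  · rw [gg_insert, ← sup_assoc, Finset.card_insert_of_notMem heF]
    have := cc_sup_edge hne hr
    omega

lemma pathsplit {X : SimpleGraph V} {u v a b : V} {p : X.Walk u v} (hp : p.IsPath)
    (hf : s(a, b) ∈ p.edges) :
    ((X.deleteEdges {s(a, b)}).Reachable u a ∧ (X.deleteEdges {s(a, b)}).Reachable b v) ∨
      ((X.deleteEdges {s(a, b)}).Reachable u b ∧ (X.deleteEdges {s(a, b)}).Reachable a v) := by
  induction p with
  | nil => simp at hf
  | @cons u w v ha q ih =>
    rw [Walk.edges_cons, List.mem_cons] at hf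
    have hnd := hp.edges_nodup
    rw [Walk.edges_cons] at hnd
    have hq : q.IsPath := hp.of_cons
    rcases hf with hf | hf
    · have hqf : ∀ e ∈ q.edges, e ∉ ({s(a, b)} : Set (Sym2 V)) := by
        intro e heq hes
        rw [Set.mem_singleton_iff] at hes
        subst hes
        rw [hf] at heq
        exact (List.nodup_cons.1 hnd).1 heq
      have hreach : (X.deleteEdges {s(a, b)}).Reachable w v := ⟨q.toDeleteEdges _ hqf⟩
      rcases Sym2.eq_iff.1 hf.symm with ⟨rfl, rfl⟩ | ⟨rfl, rfl⟩
      · exact Or.inl ⟨Reachable.refl _, hreach⟩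
      · exact Or.inr ⟨Reachable.refl _, hreach⟩
    · have hne : ¬(s(u, w) = s(a, b)) := by
        intro hEq
        exact (List.nodup_cons.1 hnd).1 (hEq ▸ hf)
      have hadj : (X.deleteEdges {s(a, b)}).Adj u w := by
        rw [SimpleGraph.deleteEdges_adj]
        exact ⟨ha, by simpa using hne⟩
      rcases ih hq hf with ⟨h1, h2⟩ | ⟨h1, h2⟩
      · exact Or.inl ⟨hadj.reachable.trans h1, h2⟩
      · exact Or.inr ⟨hadj.reachable.trans h1, h2⟩

/-! ### The exchange argument -/

lemma swap_reach_iff {B : SimpleGraph V} {F : Finset (Sym2 V)} {x y : V} {f : Sym2 V}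
    (P : (B ⊔ gg F).Walk x y) (hP : P.IsPath) (hfP : f ∈ P.edges) (hfF : f ∈ F)
    (hxy : x ≠ y) (u v : V) :
    (B ⊔ gg (insert s(x, y) (F.erase f))).Reachable u v ↔ (B ⊔ gg F).Reachable u v := by
  induction f using Sym2.ind with
  | _ a b =>
  have hPxy : (B ⊔ gg F).Reachable x y := ⟨P⟩
  have hdel : (B ⊔ gg F).deleteEdges {s(a, b)} ≤ B ⊔ gg (insert s(x, y) (F.erase s(a, b))) := by
    intro p q hpq
    rw [SimpleGraph.deleteEdges_adj] at hpq
    obtain ⟨hpq, hne⟩ := hpq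
    rw [sup_adj] at hpq ⊢
    rcases hpq with h1 | h1
    · exact Or.inl h1
    · rw [gg, fromEdgeSet_adj] at h1 ⊢
      refine Or.inr ⟨?_, h1.2⟩
      rw [Finset.coe_insert]
      right
      rw [Finset.coe_erase]
      exact ⟨h1.1, by simpa using hne⟩
  have hab : (B ⊔ gg (insert s(x, y) (F.erase s(a, b)))).Reachable a b := by
    have hsplit := pathsplit hP hfP
    have hxyadj : (B ⊔ gg (insert s(x, y) (F.erase s(a, b)))).Adj x y := by
      rw [sup_adj, gg, fromEdgeSet_adj]
      exact Or.inr ⟨by simp, hxy⟩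
    rcases hsplit with ⟨h1, h2⟩ | ⟨h1, h2⟩
    · exact (h1.mono hdel).symm.trans (hxyadj.reachable.trans (h2.mono hdel).symm)
    · exact (h2.mono hdel).trans (hxyadj.reachable.symm.trans (h1.mono hdel))
  constructor
  · apply reach_repl
    intro p q hpq
    rw [sup_adj] at hpq
    rcases hpq with h1 | h1
    · exact h1.reachable.mono le_sup_left
    · rw [gg, fromEdgeSet_adj, Finset.coe_insert, Set.mem_insert_iff] at h1
      rcases h1 with ⟨h1 | h1, hne⟩
      · rcases Sym2.eq_iff.1 h1 with ⟨rfl, rfl⟩ | ⟨rfl, rfl⟩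
        · exact hPxy
        · exact hPxy.symm
      · rw [Finset.coe_erase, Set.mem_diff] at h1
        refine Adj.reachable ?_
        rw [sup_adj, gg, fromEdgeSet_adj]
        exact Or.inr ⟨h1.1, hne⟩
  · apply reach_repl
    intro p q hpq
    rw [sup_adj] at hpq
    rcases hpq with h1 | h1
    · exact h1.reachable.mono le_sup_left
    · rw [gg, fromEdgeSet_adj] at h1
      obtain ⟨h1, hne⟩ := h1
      by_cases hf : s(p, q) = s(a, b)
      · rcases Sym2.eq_iff.1 hf with ⟨rfl, rfl⟩ | ⟨rfl, rfl⟩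
        · exact hab
        · exact hab.symm
      · refine Adj.reachable ?_
        rw [sup_adj, gg, fromEdgeSet_adj]
        refine Or.inr ⟨?_, hne⟩
        rw [Finset.coe_insert]
        right
        rw [Finset.coe_erase]
        exact ⟨h1, hf⟩

section Exchange

variable (G) (B : SimpleGraph V) (F0 : Bool → Finset (Sym2 V)) (e0 : Sym2 V)

/-- Pairs (family, focus edge) reachable by exchange moves. -/
inductive RP : (Bool → Finset (Sym2 V)) → Sym2 V → Prop
  | base : RP F0 e0
  | step {F : Bool → Finset (Sym2 V)} {e : Sym2 V} {i : Bool} {x y : V}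
      (hR : RP F e) (he : e = s(x, y))
      (P : (B ⊔ gg (F i)).Walk x y) (hP : P.IsPath) {f : Sym2 V}
      (hfP : f ∈ P.edges) (hfF : f ∈ F i) :
      RP (Function.update F i (insert e ((F i).erase f))) f

/-- Validity of a family. -/
def Fam (F : Bool → Finset (Sym2 V)) : Prop :=
  (∀ i, Good G B (F i)) ∧ (∀ i j, i ≠ j → Disjoint (F i) (F j))

/-- Edges ever used as focus. -/
def DD : Set (Sym2 V) := {f | ∃ F, RP B F0 e0 F f}

/-- The exchange-closed vertex set. -/
def UU (x0 : V) : Set V := {z | (B ⊔ fromEdgeSet (DD B F0 e0)).Reachable x0 z}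

/-- Edges with both ends in `UU`. -/
noncomputable def EUf (x0 : V) (F : Finset (Sym2 V)) : Finset (Sym2 V) :=
  F.filter fun f => ∀ a ∈ f, a ∈ UU B F0 e0 x0

variable {G B F0 e0}
variable {x0 y0 : V}

lemma uu_closed_adj {z w : V} (hz : z ∈ UU B F0 e0 x0)
    (h : (B ⊔ fromEdgeSet (DD B F0 e0)).Adj z w) : w ∈ UU B F0 e0 x0 :=
  hz.trans h.reachable

lemma uu_closed_breach {z w : V} (hz : z ∈ UU B F0 e0 x0)
    (h : B.Reachable z w) : w ∈ UU B F0 e0 x0 :=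
  hz.trans (h.mono le_sup_left)

variable (hfam0 : Fam G B F0)
  (hmax : ∀ F : Bool → Finset (Sym2 V), Fam G B F →
    (F true).card + (F false).card ≤ (F0 true).card + (F0 false).card)
  (he0G : e0 ∈ G.edgeSet) (he0F : ∀ i, e0 ∉ F0 i)
  (he0 : e0 = s(x0, y0)) (hx0y0 : ¬B.Reachable x0 y0)

section

include hfam0 he0G he0F he0 hx0y0

lemma rp_valid {F : Bool → Finset (Sym2 V)} {e : Sym2 V} (h : RP B F0 e0 F e) :
    (Fam G B F ∧ (∀ i, (F i).card = (F0 i).card)) ∧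
      (e ∈ G.edgeSet ∧ (∀ i, e ∉ F i) ∧ ∀ a b, e = s(a, b) → ¬B.Reachable a b) := by
  induction h with
  | base =>
    refine ⟨⟨hfam0, fun i => rfl⟩, he0G, he0F, fun a b hab => ?_⟩
    rw [he0] at hab
    rcases Sym2.eq_iff.1 hab.symm with ⟨rfl, rfl⟩ | ⟨rfl, rfl⟩
    · exact hx0y0
    · exact fun hr => hx0y0 hr.symm
  | @step F e i x y hR he P hP f hfP hfF ih =>
    obtain ⟨⟨⟨hgood, hdisj⟩, hcards⟩, heG, heF, heB⟩ := ih
    have hxyne : x ≠ y := by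
      intro hEq
      exact G.not_isDiag_of_mem_edgeSet (he ▸ heG)
        (by rw [hEq]; exact Sym2.mk_isDiag_iff.2 rfl)
    have hfG : f ∈ G.edgeSet := (hgood i).1 hfF
    have hswap := swap_reach_iff P hP hfP hfF hxyne
    have hcardnew : (insert e ((F i).erase f)).card = (F i).card := by
      rw [Finset.card_insert_of_notMem (fun hc => heF i (Finset.erase_subset _ _ hc)),
        Finset.card_erase_add_one hfF]
    have hgoodnew : Good G B (insert e ((F i).erase f)) := by
      constructor
      · rw [Finset.coe_insert]
        exact Set.insert_subset (he ▸ heG)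
          (Set.Subset.trans (Finset.coe_subset.2 (Finset.erase_subset _ _)) (hgood i).1)
      · rw [hcardnew]
        have hcc : cc (B ⊔ gg (insert e ((F i).erase f))) = cc (B ⊔ gg (F i)) := by
          subst he
          exact cc_eq_of_reach_iff fun u v => hswap u v
        rw [hcc]
        exact (hgood i).2
    have hupd : ∀ j, Function.update F i (insert e ((F i).erase f)) j =
        if j = i then insert e ((F i).erase f) else F j := by
      intro j
      by_cases hj : j = i
      · subst hj; rw [Function.update_self, if_pos rfl]
      · rw [Function.update_of_ne hj, if_neg hj]
    refine ⟨⟨⟨?_, ?_⟩, ?_⟩, hfG, ?_, ?_⟩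
    · intro j
      rw [hupd j]
      by_cases hj : j = i
      · rw [if_pos hj]; exact hgoodnew
      · rw [if_neg hj]; exact hgood j
    · intro j k hjk
      rw [hupd j, hupd k]
      by_cases hj : j = i
      · rw [if_pos hj, if_neg (by rw [hj] at hjk; exact fun hk => hjk hk.symm)]
        rw [Finset.disjoint_left]
        intro g hg
        rw [Finset.mem_insert] at hg
        rcases hg with rfl | hg
        · exact heF k
        · have : g ∈ F i := Finset.erase_subset _ _ hg
          exact Finset.disjoint_left.1 (hdisj i k (by rw [← hj]; exact hjk)) this
      · rw [if_neg hj]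
        by_cases hk : k = i
        · rw [if_pos hk]
          rw [Finset.disjoint_right]
          intro g hg
          rw [Finset.mem_insert] at hg
          rcases hg with rfl | hg
          · exact heF j
          · have : g ∈ F i := Finset.erase_subset _ _ hg
            exact Finset.disjoint_right.1 (hdisj j i (hk ▸ hjk)) this
        · rw [if_neg hk]; exact hdisj j k hjk
    · intro j
      rw [hupd j]
      by_cases hj : j = i
      · rw [if_pos hj, hcardnew, hj]; exact hcards i
      · rw [if_neg hj]; exact hcards j
    · intro j
      rw [hupd j]
      by_cases hj : j = i
      · rw [if_pos hj, Finset.mem_insert]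
        rintro (rfl | hc)
        · exact heF i hfF
        · exact (Finset.notMem_erase f (F i)) hc
      · rw [if_neg hj]
        exact fun hc => Finset.disjoint_left.1 (hdisj i j (Ne.symm hj)) hfF hc
    · intro a b hab
      exact good_not_reach_base (hgood i) hfF hab

end

section

include hfam0 hmax he0G he0F he0 hx0y0

lemma rp_nonadd {F : Bool → Finset (Sym2 V)} {e : Sym2 V} (h : RP B F0 e0 F e)
    {a b : V} (hab : e = s(a, b)) (i : Bool) : (B ⊔ gg (F i)).Reachable a b := by
  by_contra hr
  obtain ⟨⟨⟨hgood, hdisj⟩, hcards⟩, heG, heF, heB⟩ :=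
    rp_valid hfam0 he0G he0F he0 hx0y0 h
  have hnew : Fam G B (Function.update F i (insert e (F i))) := by
    have hgoodnew : Good G B (insert e (F i)) := good_insert (hgood i) heG (heF i) hab hr
    constructor
    · intro j
      by_cases hj : j = i
      · subst hj; rw [Function.update_self]; exact hgoodnew
      · rw [Function.update_of_ne hj]; exact hgood j
    · intro j k hjk
      by_cases hj : j = i
      · subst hj
        rw [Function.update_self, Function.update_of_ne (Ne.symm hjk)]
        rw [Finset.disjoint_left]
        intro g hg
        rw [Finset.mem_insert] at hg
        rcases hg with rfl | hg
        · exact heF k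
        · exact Finset.disjoint_left.1 (hdisj j k hjk) hg
      · rw [Function.update_of_ne hj]
        by_cases hk : k = i
        · subst hk
          rw [Function.update_self, Finset.disjoint_right]
          intro g hg
          rw [Finset.mem_insert] at hg
          rcases hg with rfl | hg
          · exact heF j
          · exact Finset.disjoint_right.1 (hdisj j k hjk) hg
        · rw [Function.update_of_ne hk]; exact hdisj j k hjk
  have hge := hmax _ hnew
  have hcardup : ∀ j, (Function.update F i (insert e (F i)) j).card =
      if j = i then (F i).card + 1 else (F j).card := by
    intro j
    by_cases hj : j = i
    · rw [hj, Function.update_self, if_pos rfl, Finset.card_insert_of_notMem (heF i)]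
    · rw [Function.update_of_ne hj, if_neg hj]
  rw [hcardup true, hcardup false] at hge
  have h1 := hcards true
  have h2 := hcards false
  cases i <;> simp at hge <;> omega

omit hfam0 hmax he0G he0F he0 hx0y0 in
lemma walk_support_in_UU {Fi : Finset (Sym2 V)} :
    ∀ {u w : V} (Q : (B ⊔ gg Fi).Walk u w),
      (∀ g ∈ Q.edges, g ∈ Fi → g ∈ DD B F0 e0) → u ∈ UU B F0 e0 x0 →
      ∀ z ∈ Q.support, z ∈ UU B F0 e0 x0 := by
  intro u w Q
  induction Q with
  | nil =>
    intro _ hu z hz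
    rw [Walk.support_nil, List.mem_singleton] at hz
    exact hz ▸ hu
  | @cons p q r hadj Q ihQ =>
    intro hD hu z hz
    have hq : q ∈ UU B F0 e0 x0 := by
      rw [sup_adj] at hadj
      rcases hadj with h1 | h1
      · exact uu_closed_adj hu (by rw [sup_adj]; exact Or.inl h1)
      · rw [gg, fromEdgeSet_adj] at h1
        have hD1 : s(p, q) ∈ DD B F0 e0 :=
          hD _ (by rw [Walk.edges_cons]; exact List.mem_cons_self) h1.1
        exact uu_closed_adj hu
          (by rw [sup_adj, fromEdgeSet_adj]; exact Or.inr ⟨hD1, h1.2⟩)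
    rw [Walk.support_cons, List.mem_cons] at hz
    rcases hz with rfl | hz
    · exact hu
    · exact ihQ (fun g hg => hD g (by rw [Walk.edges_cons]; exact List.mem_cons_of_mem _ hg)) hq z hz

lemma rp_focus_mem {F : Bool → Finset (Sym2 V)} {e : Sym2 V} (h : RP B F0 e0 F e) :
    ∀ a b, e = s(a, b) → a ∈ UU B F0 e0 x0 ∧ b ∈ UU B F0 e0 x0 := by
  induction h with
  | base =>
    intro a b hab
    have hx0U : x0 ∈ UU B F0 e0 x0 := Reachable.refl _
    have hy0U : y0 ∈ UU B F0 e0 x0 := by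
      refine uu_closed_adj hx0U ?_
      rw [sup_adj, fromEdgeSet_adj]
      exact Or.inr ⟨(by rw [← he0]; exact ⟨F0, RP.base⟩),
        fun hEq => hx0y0 (hEq ▸ Reachable.refl _)⟩
    rw [he0] at hab
    rcases Sym2.eq_iff.1 hab.symm with ⟨rfl, rfl⟩ | ⟨rfl, rfl⟩
    · exact ⟨hx0U, hy0U⟩
    · exact ⟨hy0U, hx0U⟩
  | @step F e i x y hR he P hP f hfP hfF ih =>
    intro a b hab
    obtain ⟨hxU, hyU⟩ := ih x y he
    have hDedges : ∀ g ∈ P.edges, g ∈ F i → g ∈ DD B F0 e0 := by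
      intro g hg hgF
      exact ⟨_, RP.step hR he P hP hg hgF⟩
    have hall := walk_support_in_UU (x0 := x0) P hDedges hxU
    subst hab
    exact ⟨hall a (P.fst_mem_support_of_mem_edges hfP),
      hall b (P.snd_mem_support_of_mem_edges hfP)⟩

lemma rp_focus_mem' {F : Bool → Finset (Sym2 V)} {e : Sym2 V} (h : RP B F0 e0 F e) :
    ∀ a ∈ e, a ∈ UU B F0 e0 x0 := by
  intro a ha
  exact (rp_focus_mem hfam0 hmax he0G he0F he0 hx0y0 h a (Sym2.Mem.other ha)
    (Sym2.other_spec ha).symm).1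

omit hfam0 hmax he0G he0F he0 hx0y0 in
lemma euf_sub (F : Finset (Sym2 V)) : EUf B F0 e0 x0 F ⊆ F := Finset.filter_subset _ _

lemma transfer_walk {Fi : Finset (Sym2 V)} {x y : V} (P : (B ⊔ gg Fi).Walk x y)
    (hD : ∀ g ∈ P.edges, g ∈ Fi → g ∈ DD B F0 e0) :
    ∀ g ∈ P.edges, g ∈ (B ⊔ gg (EUf B F0 e0 x0 Fi)).edgeSet := by
  intro g hg
  have hge : g ∈ (B ⊔ gg Fi).edgeSet := P.edges_subset_edgeSet hg
  rw [edgeSet_sup] at hge ⊢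
  rcases hge with h1 | h1
  · exact Or.inl h1
  · rw [gg, edgeSet_fromEdgeSet] at h1 ⊢
    obtain ⟨h1, h2⟩ := h1
    refine Or.inr ⟨?_, h2⟩
    rw [Finset.mem_coe] at h1 ⊢
    rw [EUf, Finset.mem_filter]
    refine ⟨h1, ?_⟩
    intro a ha
    have hgD := hD g hg h1
    obtain ⟨FF, hFF⟩ := hgD
    exact rp_focus_mem' hfam0 hmax he0G he0F he0 hx0y0 hFF a ha

omit hfam0 hmax he0G he0F he0 hx0y0 in
lemma euf_insert_erase {e f : Sym2 V} {F : Finset (Sym2 V)}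
    (he : ∀ a ∈ e, a ∈ UU B F0 e0 x0) :
    EUf B F0 e0 x0 (insert e (F.erase f)) = insert e ((EUf B F0 e0 x0 F).erase f) := by
  ext g
  simp only [EUf, Finset.mem_filter, Finset.mem_insert, Finset.mem_erase]
  constructor
  · rintro ⟨rfl | ⟨hgf, hgF⟩, hpred⟩
    · exact Or.inl rfl
    · exact Or.inr ⟨hgf, hgF, hpred⟩
  · rintro (rfl | ⟨hgf, hgF, hpred⟩)
    · exact ⟨Or.inl rfl, he⟩
    · exact ⟨Or.inr ⟨hgf, hgF⟩, hpred⟩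

lemma rp_invar {F : Bool → Finset (Sym2 V)} {e : Sym2 V} (h : RP B F0 e0 F e) :
    ∀ (i : Bool) (u v : V),
    (B ⊔ gg (EUf B F0 e0 x0 (F i))).Reachable u v ↔
      (B ⊔ gg (EUf B F0 e0 x0 (F0 i))).Reachable u v := by
  induction h with
  | base => exact fun i u v => Iff.rfl
  | @step F e i x y hR he P hP f hfP hfF ih =>
    intro j u v
    by_cases hj : j = i
    · subst hj
      rw [Function.update_self]
      have hePred : ∀ a ∈ e, a ∈ UU B F0 e0 x0 := by
        intro a ha
        exact (rp_focus_mem hfam0 hmax he0G he0F he0 hx0y0 hR a (Sym2.Mem.other ha)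
          (Sym2.other_spec ha).symm).1
      have hfPred : ∀ a ∈ f, a ∈ UU B F0 e0 x0 :=
        rp_focus_mem' hfam0 hmax he0G he0F he0 hx0y0 (RP.step hR he P hP hfP hfF)
      rw [he] at hePred
      have heq := euf_insert_erase (B := B) (F0 := F0) (e0 := e0) (x0 := x0)
        (f := f) (F := F j) (he ▸ hePred : ∀ a ∈ e, a ∈ UU B F0 e0 x0)
      rw [heq]
      -- transfer the path
      have hDedges : ∀ g ∈ P.edges, g ∈ F j → g ∈ DD B F0 e0 := by
        intro g hg hgF
        exact ⟨_, RP.step hR he P hP hg hgF⟩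
      have htr := transfer_walk hfam0 hmax he0G he0F he0 hx0y0 (x0 := x0) P hDedges
      set P' := P.transfer _ htr with hP'def
      have hP' : P'.IsPath := hP.transfer htr
      have hfP' : f ∈ P'.edges := by
        rw [hP'def, Walk.edges_transfer]
        exact hfP
      have hfEU : f ∈ EUf B F0 e0 x0 (F j) := by
        rw [EUf, Finset.mem_filter]
        exact ⟨hfF, hfPred⟩
      have hxyne : x ≠ y := by
        have heG : e ∈ G.edgeSet :=
          (rp_valid hfam0 he0G he0F he0 hx0y0 hR).2.1
        intro hEq
        exact G.not_isDiag_of_mem_edgeSet (he ▸ heG)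
          (by rw [hEq]; exact Sym2.mk_isDiag_iff.2 rfl)
      have := swap_reach_iff P' hP' hfP' hfEU hxyne u v
      rw [he]
      rw [this]
      exact ih j u v
    · rw [Function.update_of_ne hj]
      exact ih j u v

lemma exchange_main {u : V} (hu : u ∈ UU B F0 e0 x0) (i : Bool) :
    (B ⊔ gg (EUf B F0 e0 x0 (F0 i))).Reachable x0 u := by
  refine reach_repl ?_ hu
  intro z w hzw
  rw [sup_adj] at hzw
  rcases hzw with h1 | h1
  · exact h1.reachable.mono le_sup_left
  · rw [fromEdgeSet_adj] at h1
    obtain ⟨⟨Ff, hRf⟩, hne⟩ := h1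
    have hreach := rp_nonadd hfam0 hmax he0G he0F he0 hx0y0 hRf rfl i
    obtain ⟨Q⟩ := hreach
    set P := Q.bypass with hPdef
    have hP : P.IsPath := Q.bypass_isPath
    have hDedges : ∀ g ∈ P.edges, g ∈ Ff i → g ∈ DD B F0 e0 := by
      intro g hg hgF
      exact ⟨_, RP.step hRf rfl P hP hg hgF⟩
    have htr := transfer_walk hfam0 hmax he0G he0F he0 hx0y0 (x0 := x0) P hDedges
    have : (B ⊔ gg (EUf B F0 e0 x0 (Ff i))).Reachable z w := ⟨P.transfer _ htr⟩
    rw [rp_invar hfam0 hmax he0G he0F he0 hx0y0 hRf i z w] at this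
    exact this

end

end Exchange




lemma reach_sup_congr {X Y Z : SimpleGraph V} (h : ∀ u v, X.Reachable u v ↔ Y.Reachable u v)
    (u v : V) : (X ⊔ Z).Reachable u v ↔ (Y ⊔ Z).Reachable u v := by
  constructor <;> apply reach_repl <;> intro p q hpq <;> rw [sup_adj] at hpq
  · rcases hpq with h1 | h1
    · exact ((h p q).1 h1.reachable).mono le_sup_left
    · exact Adj.reachable (by rw [sup_adj]; exact Or.inr h1)
  · rcases hpq with h1 | h1
    · exact ((h p q).2 h1.reachable).mono le_sup_left
    · exact Adj.reachable (by rw [sup_adj]; exact Or.inr h1)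

lemma cc_pos [Nonempty V] (X : SimpleGraph V) : 1 ≤ cc X := by
  haveI : Nonempty X.ConnectedComponent := ⟨X.connectedComponentMk (Classical.arbitrary V)⟩
  exact Nat.card_pos

lemma good_empty {G B : SimpleGraph V} : Good G B ∅ := by
  constructor
  · simp
  · rw [gg, Finset.coe_empty, fromEdgeSet_empty, sup_bot_eq, Finset.card_empty]
    omega


lemma gg_le {G : SimpleGraph V} {F : Finset (Sym2 V)} (h : (↑F : Set (Sym2 V)) ⊆ G.edgeSet) :
    gg F ≤ G := by
  intro a b hadj
  rw [gg, fromEdgeSet_adj] at hadj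
  exact (SimpleGraph.mem_edgeSet G).1 (h hadj.1)

/-! ### Cross edges and the main induction -/

noncomputable def crossFinset (G W : SimpleGraph V) : Finset (Sym2 V) :=
  G.edgeFinset.filter fun e => e ∈ Sym2.fromRel (⟨fun _ _ h => (h ∘ Reachable.symm : _)⟩
    : Std.Symm fun u v => ¬W.Reachable u v)

lemma mem_crossFinset {G W : SimpleGraph V} {a b : V} :
    s(a, b) ∈ crossFinset G W ↔ s(a, b) ∈ G.edgeSet ∧ ¬W.Reachable a b := by
  rw [crossFinset, Finset.mem_filter, Sym2.fromRel_prop, mem_edgeFinset]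

theorem NWmain [Nonempty V] (G : SimpleGraph V) (n : ℕ) (B : SimpleGraph V) (hB : B ≤ G)
    (hn : cc B = n) :
    (∃ W : SimpleGraph V, W ≤ G ∧ 2 ≤ cc W ∧ (crossFinset G W).card + 2 < 2 * cc W) ∨
      (∃ F : Bool → Finset (Sym2 V), (∀ i, (↑(F i) : Set (Sym2 V)) ⊆ G.edgeSet) ∧
        (∀ i j, i ≠ j → Disjoint (F i) (F j)) ∧
        ∀ i, (F i).card + 1 = cc B ∧ cc (B ⊔ gg (F i)) = 1) := by
  induction n using Nat.strong_induction_on generalizing B with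
  | _ n ih =>
  subst hn
  by_cases hcc2 : (crossFinset G B).card + 2 < 2 * cc B
  · exact Or.inl ⟨B, hB, by omega, hcc2⟩
  push_neg at hcc2
  -- maximal family
  have hne : (Finset.univ.filter (Fam G B)).Nonempty :=
    ⟨fun _ => ∅, Finset.mem_filter.2 ⟨Finset.mem_univ _,
      ⟨fun _ => good_empty, fun _ _ _ => Finset.disjoint_empty_left _⟩⟩⟩
  obtain ⟨F0, hF0mem, hF0max⟩ :=
    Finset.exists_max_image _ (fun F : Bool → Finset (Sym2 V) =>
      (F true).card + (F false).card) hne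
  have hfam0 : Fam G B F0 := (Finset.mem_filter.1 hF0mem).2
  have hmax : ∀ F, Fam G B F →
      (F true).card + (F false).card ≤ (F0 true).card + (F0 false).card :=
    fun F hF => hF0max F (Finset.mem_filter.2 ⟨Finset.mem_univ _, hF⟩)
  have hbound : ∀ i, cc (B ⊔ gg (F0 i)) + (F0 i).card = cc B := fun i => (hfam0.1 i).2
  have hp1 : 1 ≤ cc (B ⊔ gg (F0 true)) := cc_pos _
  have hp2 : 1 ≤ cc (B ⊔ gg (F0 false)) := cc_pos _
  by_cases htot : (F0 true).card + (F0 false).card + 2 = 2 * cc B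
  · refine Or.inr ⟨F0, fun i => (hfam0.1 i).1, hfam0.2, fun i => ?_⟩
    have h1 := hbound true
    have h2 := hbound false
    cases i
    · constructor <;> omega
    · constructor <;> omega
  · -- find e0
    have htotlt : (F0 true).card + (F0 false).card + 2 < 2 * cc B := by
      have h1 := hbound true
      have h2 := hbound false
      omega
    have hsubcross : ∀ i, F0 i ⊆ crossFinset G B := by
      intro i f hf
      revert hf
      induction f using Sym2.ind with | _ a b =>
      intro hf
      rw [mem_crossFinset]
      exact ⟨(hfam0.1 i).1 hf, good_not_reach_base (hfam0.1 i) hf rfl⟩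
    have hcard_union : ((F0 true) ∪ (F0 false)).card < (crossFinset G B).card := by
      have := Finset.card_union_le (F0 true) (F0 false)
      omega
    obtain ⟨e0, he0cross, he0F⟩ : ∃ e0 ∈ crossFinset G B, e0 ∉ (F0 true) ∪ (F0 false) := by
      by_contra hc
      push_neg at hc
      exact absurd (Finset.card_le_card fun e he => hc e he) (not_le.2 hcard_union)
    revert he0cross he0F
    induction e0 using Sym2.ind with | _ x0 y0 =>
    intro he0cross he0F
    rw [mem_crossFinset] at he0cross
    obtain ⟨he0G, hx0y0⟩ := he0cross
    rw [Finset.mem_union] at he0F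
    push_neg at he0F
    have he0F' : ∀ i, s(x0, y0) ∉ F0 i := by
      intro i
      cases i
      · exact he0F.2
      · exact he0F.1
    -- the exchange set
    set S : Bool → Finset (Sym2 V) := fun i => EUf B F0 s(x0, y0) x0 (F0 i) with hSdef
    have hexch : ∀ u, u ∈ UU B F0 s(x0, y0) x0 → ∀ i, (B ⊔ gg (S i)).Reachable x0 u :=
      fun u hu i => exchange_main hfam0 hmax he0G he0F' rfl hx0y0 hu i
    have hy0U : y0 ∈ UU B F0 s(x0, y0) x0 :=
      (rp_focus_mem hfam0 hmax he0G he0F' rfl hx0y0 RP.base x0 y0 rfl).2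
    have hx0U : x0 ∈ UU B F0 s(x0, y0) x0 := Reachable.refl _
    have hchar : ∀ i u v, (B ⊔ gg (S i)).Reachable u v ↔
        (B.Reachable u v ∨ (u ∈ UU B F0 s(x0, y0) x0 ∧ v ∈ UU B F0 s(x0, y0) x0)) := by
      intro i u v
      constructor
      · intro h
        obtain ⟨p⟩ := h
        induction p with
        | nil => exact Or.inl (Reachable.refl _)
        | @cons a c w hadj q ihq =>
          rw [sup_adj] at hadj
          rcases hadj with h1 | h1
          · rcases ihq with h2 | ⟨h2, h3⟩
            · exact Or.inl (h1.reachable.trans h2)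
            · exact Or.inr ⟨uu_closed_breach h2 h1.reachable.symm, h3⟩
          · rw [gg, fromEdgeSet_adj] at h1
            have hpred := (Finset.mem_filter.1 h1.1).2
            have haU : a ∈ UU B F0 s(x0, y0) x0 := hpred a (Sym2.mem_mk_left a c)
            have hcU : c ∈ UU B F0 s(x0, y0) x0 := hpred c (Sym2.mem_mk_right a c)
            rcases ihq with h2 | ⟨h2, h3⟩
            · exact Or.inr ⟨haU, uu_closed_breach hcU h2⟩
            · exact Or.inr ⟨haU, h3⟩
      · rintro (h | ⟨hu, hv⟩)
        · exact h.mono le_sup_left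
        · exact (hexch u hu i).symm.trans (hexch v hv i)
    have hSgood : ∀ i, Good G B (S i) := fun i =>
      good_subset (hfam0.1 i) (Finset.filter_subset _ _)
    have hScc : ∀ i, cc (B ⊔ gg (S i)) + (S i).card = cc B := fun i => (hSgood i).2
    have hcc12 : cc (B ⊔ gg (S true)) = cc (B ⊔ gg (S false)) :=
      cc_eq_of_reach_iff fun u v => (hchar true u v).trans (hchar false u v).symm
    have hlt : cc (B ⊔ gg (S true)) < cc B :=
      cc_lt_of_reach le_sup_left hx0y0 ((hchar true x0 y0).2 (Or.inr ⟨hx0U, hy0U⟩))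
    have hB' : B ⊔ gg (S true) ≤ G := sup_le hB (gg_le (hSgood true).1)
    rcases ih (cc (B ⊔ gg (S true))) hlt _ hB' rfl with ⟨W, hW⟩ | ⟨T, hTsub, hTdisj, hTprop⟩
    · exact Or.inl ⟨W, hW⟩
    · -- combine
      have hTgood : ∀ i, Good G (B ⊔ gg (S true)) (T i) := by
        intro i
        refine ⟨hTsub i, ?_⟩
        have h1 := (hTprop i).1
        have h2 := (hTprop i).2
        omega
      have hTS : ∀ i j, Disjoint (T i) (S j) := by
        intro i j
        rw [Finset.disjoint_left]
        intro g hgT hgS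
        revert hgT hgS
        induction g using Sym2.ind with | _ a b =>
        intro hgT hgS
        have hnr := good_not_reach_base (hTgood i) hgT rfl
        have hpred := (Finset.mem_filter.1 hgS).2
        exact hnr ((hchar true a b).2 (Or.inr ⟨hpred a (Sym2.mem_mk_left a b),
          hpred b (Sym2.mem_mk_right a b)⟩))
      refine Or.inr ⟨fun i => T i ∪ S i, ?_, ?_, ?_⟩
      · intro i
        rw [Finset.coe_union]
        exact Set.union_subset (hTsub i) (hSgood i).1
      · intro i j hij
        rw [Finset.disjoint_union_left, Finset.disjoint_union_right,
          Finset.disjoint_union_right]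
        exact ⟨⟨hTdisj i j hij, hTS i j⟩, ⟨(hTS j i).symm,
          Finset.disjoint_coe.1 (by
            rw [Finset.disjoint_coe]
            exact (hfam0.2 i j hij).mono (Finset.filter_subset _ _) (Finset.filter_subset _ _))⟩⟩
      · intro i
        have hdisjTS := hTS i i
        have hcardU : (T i ∪ S i).card = (T i).card + (S i).card :=
          Finset.card_union_of_disjoint hdisjTS
        have hggU : B ⊔ gg (T i ∪ S i) = (B ⊔ gg (S i)) ⊔ gg (T i) := by
          rw [gg, gg, gg, Finset.coe_union, fromEdgeSet_union, sup_assoc, sup_comm (fromEdgeSet _)]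
        have hcci : cc (B ⊔ gg (S i)) = cc (B ⊔ gg (S true)) := by
          cases i
          · exact hcc12.symm
          · rfl
        have hccT : cc ((B ⊔ gg (S i)) ⊔ gg (T i)) = 1 := by
          have hco : ∀ u v, ((B ⊔ gg (S i)) ⊔ gg (T i)).Reachable u v ↔
              ((B ⊔ gg (S true)) ⊔ gg (T i)).Reachable u v := by
            intro u v
            exact reach_sup_congr
              (fun u' v' => (hchar i u' v').trans (hchar true u' v').symm) u v
          rw [cc_eq_of_reach_iff hco]
          exact (hTprop i).2
        constructor
        · show (T i ∪ S i).card + 1 = cc B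
          rw [hcardU]
          have h1 := (hTprop i).1
          have h2 := hScc i
          have h3 := hcci
          omega
        · show cc (B ⊔ gg (T i ∪ S i)) = 1
          rw [hggU]
          exact hccT

/-! ### From edge-finsets to trees -/

lemma cc_ge (X : SimpleGraph V) : Fintype.card V ≤ cc X + X.edgeFinset.card := by
  have h := cc_le_cc_sup_add (⊥ : SimpleGraph V) X.edgeFinset
  rw [cc_bot] at h
  have hX : (⊥ : SimpleGraph V) ⊔ gg X.edgeFinset = X := by
    rw [gg, coe_edgeFinset, fromEdgeSet_edgeSet, bot_sup_eq]
  rwa [hX] at h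

lemma isTree_of_connected_of_card {X : SimpleGraph V} (hX : X.Connected)
    (hcard : X.edgeFinset.card + 1 = Fintype.card V) : X.IsTree := by
  refine ⟨hX, ?_⟩
  intro v c hc
  cases c with
  | nil => exact hc.ne_nil rfl
  | cons hadj q =>
    rename_i w
    have hnd : s(v, w) ∉ q.edges := by
      have hh := hc.edges_nodup
      rw [Walk.edges_cons] at hh
      exact (List.nodup_cons.1 hh).1
    have hq : (X.deleteEdges {s(v, w)}).Reachable w v :=
      ⟨q.toDeleteEdges _ (fun e he hes => by
        rw [Set.mem_singleton_iff] at hes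
        exact hnd (hes ▸ he))⟩
    have hiff : ∀ u z, (X.deleteEdges {s(v, w)}).Reachable u z ↔ X.Reachable u z := by
      intro u z
      constructor
      · exact fun h => h.mono (deleteEdges_le _)
      · apply reach_repl
        intro a b hab
        by_cases hab' : s(a, b) = s(v, w)
        · rcases Sym2.eq_iff.1 hab' with ⟨rfl, rfl⟩ | ⟨rfl, rfl⟩
          · exact hq.symm
          · exact hq
        · exact Adj.reachable (by
            rw [SimpleGraph.deleteEdges_adj]
            exact ⟨hab, by simpa using hab'⟩)
    have hcc1 : cc (X.deleteEdges {s(v, w)}) = 1 := by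
      rw [cc_eq_of_reach_iff hiff, cc_eq_one_iff]
      exact hX
    have hedel : (X.deleteEdges {s(v, w)}).edgeFinset = X.edgeFinset.erase s(v, w) := by
      ext e
      rw [mem_edgeFinset, Finset.mem_erase, mem_edgeFinset, edgeSet_deleteEdges]
      simp only [Set.mem_diff, Set.mem_singleton_iff]
      tauto
    have hedge : (X.deleteEdges {s(v, w)}).edgeFinset.card + 1 = X.edgeFinset.card := by
      rw [hedel, Finset.card_erase_add_one (by rw [mem_edgeFinset]; exact hadj)]
    have hge : Fintype.card V ≤ cc (X.deleteEdges {s(v, w)}) + (X.deleteEdges {s(v, w)}).edgeFinset.card := by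
      convert cc_ge (X.deleteEdges {s(v, w)})
    omega

lemma final_count [Nonempty V] (d : ℕ) (hd : 4 ≤ d) (G : SimpleGraph V)
    (hreg0 : ∀ v : V, ∃ s : Finset V, (∀ w, w ∈ s ↔ G.Adj v w) ∧ s.card = d)
    (hmin : ∀ F : Finset (Sym2 V), (↑F : Set (Sym2 V)) ⊆ G.edgeSet → F.card < 2 →
      (G.deleteEdges (↑F : Set (Sym2 V))).Connected)
    (W : SimpleGraph V) (hWG : W ≤ G) (hW2 : 2 ≤ cc W)
    (hWcross : (crossFinset G W).card + 2 < 2 * cc W) :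
    3 * (d + 1) ≤ Fintype.card V := by
  classical
  have hreg : ∀ v : V, (Finset.univ.filter (fun w => G.Adj v w)).card = d := by
    intro v
    obtain ⟨s, hs, hcard⟩ := hreg0 v
    rw [← hcard]
    congr 1
    ext w
    rw [Finset.mem_filter, hs w]
    simp
  letI : Fintype W.ConnectedComponent := Fintype.ofFinite _
  have hpcc : cc W = Fintype.card W.ConnectedComponent := Nat.card_eq_fintype_card
  set p := Fintype.card W.ConnectedComponent with hp
  set SK : W.ConnectedComponent → Finset V :=
    fun K => Finset.univ.filter (fun v => W.connectedComponentMk v = K) with hSK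
  set bd : W.ConnectedComponent → Finset (Sym2 V) :=
    fun K => (crossFinset G W).filter (fun e => ∃ a ∈ e, W.connectedComponentMk a = K) with hbd
  -- membership in bd
  have hmem_bd : ∀ (K) (a b : V), s(a, b) ∈ bd K ↔
      (s(a, b) ∈ G.edgeSet ∧ ¬W.Reachable a b ∧
        (W.connectedComponentMk a = K ∨ W.connectedComponentMk b = K)) := by
    intro K a b
    rw [hbd, Finset.mem_filter, mem_crossFinset]
    constructor
    · rintro ⟨⟨h1, h2⟩, ⟨z, hz, hzK⟩⟩
      rcases Sym2.mem_iff'.1 hz with rfl | rfl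
      · exact ⟨h1, h2, Or.inl hzK⟩
      · exact ⟨h1, h2, Or.inr hzK⟩
    · rintro ⟨h1, h2, h3 | h3⟩
      · exact ⟨⟨h1, h2⟩, a, Sym2.mem_mk_left a b, h3⟩
      · exact ⟨⟨h1, h2⟩, b, Sym2.mem_mk_right a b, h3⟩
  -- (f3): total count of vertices
  have hvert : Fintype.card V = ∑ K, (SK K).card := by
    rw [← Finset.card_univ]
    exact Finset.card_eq_sum_card_fiberwise (fun v _ => Finset.mem_univ _)
  -- (f4)
  have hbd_sum : ∑ K, (bd K).card ≤ 2 * (crossFinset G W).card := by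
    have hswap : ∑ K, (bd K).card
        = ∑ e ∈ crossFinset G W,
            (Finset.univ.filter (fun K => ∃ a ∈ e, W.connectedComponentMk a = K)).card := by
      simp_rw [hbd, Finset.card_filter]
      rw [Finset.sum_comm]
    rw [hswap]
    have hle2 : ∀ e ∈ crossFinset G W,
        (Finset.univ.filter (fun K => ∃ a ∈ e, W.connectedComponentMk a = K)).card ≤ 2 := by
      intro e _
      induction e using Sym2.ind with | _ a b =>
      have hsub : (Finset.univ.filter (fun K => ∃ z ∈ s(a, b), W.connectedComponentMk z = K))
          ⊆ {W.connectedComponentMk a, W.connectedComponentMk b} := by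
        intro K hK
        obtain ⟨z, hz, hzK⟩ := (Finset.mem_filter.1 hK).2
        rcases Sym2.mem_iff'.1 hz with rfl | rfl
        · rw [← hzK]; exact Finset.mem_insert_self _ _
        · rw [← hzK]; exact Finset.mem_insert_of_mem (Finset.mem_singleton_self _)
      calc _ ≤ ({W.connectedComponentMk a, W.connectedComponentMk b} : Finset _).card :=
            Finset.card_le_card hsub
        _ ≤ 2 := Finset.card_insert_le _ _ |>.trans (by simp)
    calc _ ≤ ∑ _e ∈ crossFinset G W, 2 := Finset.sum_le_sum hle2
      _ = 2 * (crossFinset G W).card := by rw [Finset.sum_const, smul_eq_mul, mul_comm]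
  -- (f5)
  have hbd2 : ∀ K, 2 ≤ (bd K).card := by
    intro K
    by_contra hcon
    push_neg at hcon
    have hsubedge : (↑(bd K) : Set (Sym2 V)) ⊆ G.edgeSet := by
      intro e he
      rw [Finset.mem_coe] at he
      revert he
      induction e using Sym2.ind with | _ a b =>
      intro he
      exact ((hmem_bd K a b).1 he).1
    have hconn := hmin (bd K) hsubedge (by omega)
    obtain ⟨v, hv⟩ := K.exists_rep
    haveI : Nontrivial W.ConnectedComponent := by
      rw [← Fintype.one_lt_card_iff_nontrivial]
      omega
    obtain ⟨K', hK'⟩ := exists_ne K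
    obtain ⟨w, hw⟩ := K'.exists_rep
    have hr := hconn.preconnected v w
    have hclosed : ∀ z u, (G.deleteEdges (↑(bd K) : Set (Sym2 V))).Adj z u →
        W.connectedComponentMk z = K → W.connectedComponentMk u = K := by
      intro z u hadj hz
      rw [SimpleGraph.deleteEdges_adj] at hadj
      by_contra hu
      apply hadj.2
      rw [Finset.mem_coe, hmem_bd]
      refine ⟨(SimpleGraph.mem_edgeSet G).2 hadj.1, ?_, Or.inl hz⟩
      intro hWr
      have hzu : W.connectedComponentMk z = W.connectedComponentMk u :=
        ConnectedComponent.eq.2 hWr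
      rw [← hzu] at hu
      exact hu hz
    have hwK : W.connectedComponentMk w = K :=
      reach_closed (U := {x | W.connectedComponentMk x = K}) hclosed hr hv
    exact hK' (by rw [← hw]; exact hwK)
  -- (f6): components with small boundary are large
  have hSmem : ∀ (K) (v : V), v ∈ SK K ↔ W.connectedComponentMk v = K := by
    intro K v
    rw [hSK]
    simp
  have hsize : ∀ K, (bd K).card ≤ 3 → d + 1 ≤ (SK K).card := by
    intro K hb3
    obtain ⟨v0, hv0⟩ := K.exists_rep
    have hne : (SK K).Nonempty := ⟨v0, (hSmem K v0).2 hv0⟩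
    have hout : ∑ v ∈ SK K, ((Finset.univ.filter (fun w => G.Adj v w)).filter (fun w => w ∉ SK K)).card
        ≤ (bd K).card := by
      rw [← Finset.card_sigma]
      apply Finset.card_le_card_of_injOn (fun x => s(x.1, x.2))
      · rintro ⟨v, w⟩ hx
        rw [Finset.mem_coe, Finset.mem_sigma] at hx
        obtain ⟨hv, hw⟩ := hx
        rw [Finset.mem_filter, Finset.mem_filter] at hw
        obtain ⟨⟨-, hadj⟩, hwS⟩ := hw
        show s(v, w) ∈ bd K
        rw [hmem_bd]
        refine ⟨(SimpleGraph.mem_edgeSet G).2 hadj, ?_, Or.inl ((hSmem K v).1 hv)⟩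
        intro hWr
        apply hwS
        rw [hSmem K w]
        rw [← ConnectedComponent.eq.2 hWr]
        exact (hSmem K v).1 hv
      · rintro ⟨v, w⟩ hx ⟨v', w'⟩ hx' hEq
        rw [Finset.mem_coe, Finset.mem_sigma] at hx hx'
        simp only at hEq
        rcases Sym2.eq_iff.1 hEq with ⟨rfl, rfl⟩ | ⟨rfl, rfl⟩
        · rfl
        · exfalso
          obtain ⟨hv1, hw1⟩ := hx
          obtain ⟨hv2, hw2⟩ := hx'
          rw [Finset.mem_filter] at hw1
          exact hw1.2 hv2
    have hin : ∀ v ∈ SK K, ((Finset.univ.filter (fun w => G.Adj v w)).filter (fun w => w ∈ SK K)).card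
        ≤ (SK K).card - 1 := by
      intro v hv
      have hsub : (Finset.univ.filter (fun w => G.Adj v w)).filter (fun w => w ∈ SK K)
          ⊆ (SK K).erase v := by
        intro w hw
        rw [Finset.mem_filter, Finset.mem_filter] at hw
        rw [Finset.mem_erase]
        exact ⟨fun hEq => G.irrefl (hEq ▸ hw.1.2), hw.2⟩
      calc _ ≤ ((SK K).erase v).card := Finset.card_le_card hsub
        _ = (SK K).card - 1 := Finset.card_erase_of_mem hv
    have hdeg : ∀ v ∈ SK K, ((Finset.univ.filter (fun w => G.Adj v w)).filter (fun w => w ∈ SK K)).card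
        + ((Finset.univ.filter (fun w => G.Adj v w)).filter (fun w => w ∉ SK K)).card = d := by
      intro v _
      rw [Finset.card_filter_add_card_filter_not]
      exact hreg v
    have htotal : d * (SK K).card ≤ (SK K).card * ((SK K).card - 1) + 3 := by
      have h1 : ∑ _v ∈ SK K, d = d * (SK K).card := by
        rw [Finset.sum_const, smul_eq_mul, mul_comm]
      have h2 : ∑ v ∈ SK K, ((Finset.univ.filter (fun w => G.Adj v w)).filter (fun w => w ∈ SK K)).card
          ≤ (SK K).card * ((SK K).card - 1) := by
        calc _ ≤ ∑ _v ∈ SK K, ((SK K).card - 1) := Finset.sum_le_sum hin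
          _ = (SK K).card * ((SK K).card - 1) := by rw [Finset.sum_const, smul_eq_mul]
      have h3 : d * (SK K).card
          = ∑ v ∈ SK K, (((Finset.univ.filter (fun w => G.Adj v w)).filter (fun w => w ∈ SK K)).card
            + ((Finset.univ.filter (fun w => G.Adj v w)).filter (fun w => w ∉ SK K)).card) := by
        rw [← h1]
        exact (Finset.sum_congr rfl hdeg).symm
      rw [Finset.sum_add_distrib] at h3
      omega
    by_contra hcon
    push_neg at hcon
    have hs1 : 1 ≤ (SK K).card := Finset.card_pos.2 hne
    have h2 : (SK K).card * ((SK K).card - 1) ≤ d * ((SK K).card - 1) :=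
      Nat.mul_le_mul_right _ (by omega)
    have h3 : d * (SK K).card = d * ((SK K).card - 1) + d := by
      have hss : (SK K).card - 1 + 1 = (SK K).card := by omega
      calc d * (SK K).card = d * ((SK K).card - 1 + 1) := by rw [hss]
        _ = d * ((SK K).card - 1) + d := by rw [Nat.mul_succ]
    set A := d * (SK K).card with hA
    set Bq := (SK K).card * ((SK K).card - 1) with hBq
    set C := d * ((SK K).card - 1) with hC
    omega
  -- pigeonhole
  set small := Finset.univ.filter (fun K => (bd K).card ≤ 3) with hsmalldef
  have hsmall3 : 3 ≤ small.card := by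
    by_contra hcon
    push_neg at hcon
    have hsplit := Finset.sum_filter_add_sum_filter_not Finset.univ
      (fun K => (bd K).card ≤ 3) (fun K => (bd K).card)
    rw [← hsmalldef] at hsplit
    have hlow : small.card * 2 ≤ ∑ K ∈ small, (bd K).card := by
      have := Finset.card_nsmul_le_sum small (fun K => (bd K).card) 2
        (fun K _ => hbd2 K)
      simpa using this
    have hcard' : (Finset.univ.filter (fun K => ¬(bd K).card ≤ 3)).card = p - small.card := by
      have hh := Finset.card_filter_add_card_filter_not
        (s := Finset.univ) (p := fun K => (bd K).card ≤ 3)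
      rw [Finset.card_univ] at hh
      rw [hsmalldef]
      omega
    have hhigh : (Finset.univ.filter (fun K => ¬(bd K).card ≤ 3)).card * 4
        ≤ ∑ K ∈ Finset.univ.filter (fun K => ¬(bd K).card ≤ 3), (bd K).card := by
      have := Finset.card_nsmul_le_sum (Finset.univ.filter (fun K => ¬(bd K).card ≤ 3))
        (fun K => (bd K).card) 4 (fun K hK => by
          have hh : ¬(bd K).card ≤ 3 := (Finset.mem_filter.1 hK).2
          show 4 ≤ (bd K).card
          omega)
      simpa using this
    rw [hcard'] at hhigh
    have hsmall_le : small.card ≤ p := by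
      rw [hp, ← Finset.card_univ]
      exact Finset.card_le_card (Finset.filter_subset _ _)
    rw [hpcc] at hWcross
    omega
  have hfinal : ∑ _K ∈ small, (d + 1) ≤ ∑ K ∈ small, (SK K).card :=
    Finset.sum_le_sum (fun K hK => hsize K (Finset.mem_filter.1 hK).2)
  rw [Finset.sum_const, smul_eq_mul] at hfinal
  have hsub_sum : ∑ K ∈ small, (SK K).card ≤ ∑ K, (SK K).card :=
    Finset.sum_le_sum_of_subset (Finset.filter_subset _ _)
  have h3 : 3 * (d + 1) ≤ small.card * (d + 1) := Nat.mul_le_mul_right _ hsmall3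
  omega


end NWPack

theorem stmt_13 {V : Type*} [Fintype V] [DecidableEq V]
    (d : ℕ) (hd : 4 ≤ d)
    (G : SimpleGraph V) [DecidableRel G.Adj]
    (hreg : G.IsRegularOfDegree d)
    (hcut : ∃ F : Finset (Sym2 V), (↑F : Set (Sym2 V)) ⊆ G.edgeSet ∧ F.card = 2 ∧
      ¬ (G.deleteEdges (↑F : Set (Sym2 V))).Connected)
    (hmin : ∀ F : Finset (Sym2 V), (↑F : Set (Sym2 V)) ⊆ G.edgeSet → F.card < 2 →
      (G.deleteEdges (↑F : Set (Sym2 V))).Connected)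
    (hnotrees : ¬ ∃ T₁ T₂ : SimpleGraph V,
      T₁ ≤ G ∧ T₂ ≤ G ∧ T₁.IsTree ∧ T₂.IsTree ∧ Disjoint T₁.edgeSet T₂.edgeSet) :
    3 * (d + 1) ≤ Fintype.card V := by
  classical
  have hGconn : G.Connected := by
    have h := hmin ∅ (by simp) (by simp)
    rwa [Finset.coe_empty, SimpleGraph.deleteEdges_empty] at h
  haveI : Nonempty V := hGconn.nonempty
  rcases NWPack.NWmain G (NWPack.cc (⊥ : SimpleGraph V)) ⊥ bot_le rfl with
    ⟨W, hWG, hW2, hWcross⟩ | ⟨F, hFsub, hFdisj, hFprop⟩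
  · refine NWPack.final_count d hd G ?_ hmin W hWG hW2 hWcross
    intro v
    exact ⟨G.neighborFinset v, fun w => SimpleGraph.mem_neighborFinset G v w, hreg v⟩
  · exfalso
    apply hnotrees
    have hedgeSet : ∀ i, (NWPack.gg (F i)).edgeSet = (↑(F i) : Set (Sym2 V)) := by
      intro i
      rw [NWPack.gg, SimpleGraph.edgeSet_fromEdgeSet]
      ext e
      simp only [Set.mem_diff, Set.mem_setOf_eq]
      exact ⟨fun h => h.1,
        fun h => ⟨h, fun hdg => G.not_isDiag_of_mem_edgeSet (hFsub i h) hdg⟩⟩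
    have hedgeFinset : ∀ i, (NWPack.gg (F i)).edgeFinset = F i := by
      intro i
      ext e
      rw [SimpleGraph.mem_edgeFinset, hedgeSet i, Finset.mem_coe]
    have htree : ∀ i, (NWPack.gg (F i)).IsTree := by
      intro i
      obtain ⟨h1, h2⟩ := hFprop i
      rw [bot_sup_eq] at h2
      refine NWPack.isTree_of_connected_of_card (NWPack.cc_eq_one_iff.1 h2) ?_
      rw [hedgeFinset i]
      rw [NWPack.cc_bot] at h1
      exact h1
    refine ⟨NWPack.gg (F true), NWPack.gg (F false), NWPack.gg_le (hFsub true),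
      NWPack.gg_le (hFsub false), htree true, htree false, ?_⟩
    rw [hedgeSet true, hedgeSet false]
    rw [Finset.disjoint_coe]
    exact hFdisj true false (by simp)
end

section
/- For every integer d ≥ 6, the polynomial P₁₀(x) = x¹⁰ + (8−2d)x⁹ + (d²−16d+30)x⁸ + (8d²−50d+58)x⁷ + (20d²−66d+36)x⁶ + (8d²+18d−70)x⁵ + (−29d²+140d−146)x⁴ + (−20d²+57d−21)x³ + (14d²−83d+109)x² + (4d²−13d+5)x + (−d²+5d−5) satisfies P₁₀(d − 5/(d+3)) > 0. -/
theorem stmt_17 (d : ℤ) (hd : 6 ≤ d) :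
    (let D : ℝ := (d : ℝ); let x : ℝ := D - 5 / (D + 3);
      x ^ 10 + (8 - 2 * D) * x ^ 9 + (D ^ 2 - 16 * D + 30) * x ^ 8 +
        (8 * D ^ 2 - 50 * D + 58) * x ^ 7 + (20 * D ^ 2 - 66 * D + 36) * x ^ 6 +
        (8 * D ^ 2 + 18 * D - 70) * x ^ 5 + (-29 * D ^ 2 + 140 * D - 146) * x ^ 4 +
        (-20 * D ^ 2 + 57 * D - 21) * x ^ 3 + (14 * D ^ 2 - 83 * D + 109) * x ^ 2 +
        (4 * D ^ 2 - 13 * D + 5) * x + (-D ^ 2 + 5 * D - 5)) > 0 := by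
  dsimp only
  have hD : (6 : ℝ) ≤ (d : ℝ) := by exact_mod_cast hd
  set D : ℝ := (d : ℝ) with hDdef
  set e : ℝ := D - 6 with hedef
  have he : 0 ≤ e := by simp [hedef]; linarith
  have h3 : (0 : ℝ) < D + 3 := by linarith
  have h3' : D + 3 ≠ 0 := ne_of_gt h3
  set x : ℝ := D - 5 / (D + 3) with hxdef
  have key : x ^ 10 + (8 - 2 * D) * x ^ 9 + (D ^ 2 - 16 * D + 30) * x ^ 8 +
        (8 * D ^ 2 - 50 * D + 58) * x ^ 7 + (20 * D ^ 2 - 66 * D + 36) * x ^ 6 +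
        (8 * D ^ 2 + 18 * D - 70) * x ^ 5 + (-29 * D ^ 2 + 140 * D - 146) * x ^ 4 +
        (-20 * D ^ 2 + 57 * D - 21) * x ^ 3 + (14 * D ^ 2 - 83 * D + 109) * x ^ 2 +
        (4 * D ^ 2 - 13 * D + 5) * x + (-D ^ 2 + 5 * D - 5)
      = (3491297096125 + 7098123045800 * e ^ 1 + 6413198622620 * e ^ 2 +
          3414313916400 * e ^ 3 + 1195581155750 * e ^ 4 + 290634210450 * e ^ 5 +
          50374084575 * e ^ 6 + 6281781360 * e ^ 7 + 560128225 * e ^ 8 +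
          34872750 * e ^ 9 + 1440675 * e ^ 10 + 35500 * e ^ 11 + 395 * e ^ 12) /
        (D + 3) ^ 10 := by
    rw [hxdef, hedef]
    field_simp
    ring
  rw [key]
  apply div_pos
  · have h1 := pow_nonneg he 1
    have h2 := pow_nonneg he 2
    have h3 := pow_nonneg he 3
    have h4 := pow_nonneg he 4
    have h5 := pow_nonneg he 5
    have h6 := pow_nonneg he 6
    have h7 := pow_nonneg he 7
    have h8 := pow_nonneg he 8
    have h9 := pow_nonneg he 9
    have h10 := pow_nonneg he 10
    have h11 := pow_nonneg he 11
    have h12 := pow_nonneg he 12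
    linarith
  · positivity
end
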